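/- (Multiplicativity of the Kesava Menon norm, local form.) Let R be a commutative ring. For a sequence f : ℕ → R define its norm sequence N(f) : ℕ → R by N(f)(n) = ∑_{j=0}^{2n} (−1)^j · f(j) · f(2n−j). Then for any two sequences f, g : ℕ → R, N(f ⋆ g) = N(f) ⋆ N(g), where ⋆ denotes Cauchy convolution: (f ⋆ g)(n) = ∑_{j=0}^{n} f(j)·g(n−j). -/

import Mathlib

/-- Cauchy convolution of sequences. -/
def cauchyConv {R : Type*} [CommRing R] (f g : ℕ → R) : ℕ → R :=
  fun n => ∑ j ∈ Finset.range (n + 1), f j * g (n - j)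

/-- The local Kesava Menon norm of a sequence:
`N(f)(n) = ∑_{j=0}^{2n} (−1)^j f(j) f(2n−j)`. -/
def kmNorm {R : Type*} [CommRing R] (f : ℕ → R) : ℕ → R :=
  fun n => ∑ j ∈ Finset.range (2 * n + 1), (-1 : R) ^ j * f j * f (2 * n - j)

namespace KMaux

variable {R : Type*} [CommRing R]

/-- sign twist -/
def eps (f : ℕ → R) : ℕ → R := fun n => (-1 : R) ^ n * f n

/-- signed autocorrelation -/
def A (f : ℕ → R) : ℕ → R := cauchyConv (eps f) f

lemma conv_coeff (f g : ℕ → R) (n : ℕ) :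
    cauchyConv f g n = PowerSeries.coeff n (PowerSeries.mk f * PowerSeries.mk g) := by
  rw [PowerSeries.coeff_mul, Finset.Nat.sum_antidiagonal_eq_sum_range_succ_mk]
  simp [cauchyConv]

lemma mk_conv (f g : ℕ → R) :
    PowerSeries.mk (cauchyConv f g) = PowerSeries.mk f * PowerSeries.mk g := by
  ext n
  rw [PowerSeries.coeff_mk, conv_coeff]

lemma eps_conv (f g : ℕ → R) : eps (cauchyConv f g) = cauchyConv (eps f) (eps g) := by
  funext n
  simp only [eps, cauchyConv, Finset.mul_sum]
  refine Finset.sum_congr rfl fun j hj => ?_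
  have hjn : j ≤ n := Nat.lt_succ_iff.mp (Finset.mem_range.mp hj)
  have : (-1 : R) ^ n = (-1) ^ j * (-1) ^ (n - j) := by
    rw [← pow_add, Nat.add_sub_cancel' hjn]
  rw [this]; ring

lemma A_conv (f g : ℕ → R) : A (cauchyConv f g) = cauchyConv (A f) (A g) := by
  have h : ∀ h₁ h₂ : ℕ → R, PowerSeries.mk h₁ = PowerSeries.mk h₂ → h₁ = h₂ := by
    intro h₁ h₂ h
    funext n
    have := congrArg (PowerSeries.coeff (R := R) n) h
    simpa using this
  apply h
  simp only [A, eps_conv, mk_conv]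
  ring

lemma A_odd (f : ℕ → R) (k : ℕ) : A f (2 * k + 1) = 0 := by
  unfold A cauchyConv eps
  set m := 2 * k + 1 with hm
  apply Finset.sum_involution (g := fun a _ => m - a)
  · intro a ha
    have haM : a ≤ m := Nat.lt_succ_iff.mp (Finset.mem_range.mp ha)
    have h1 : m - (m - a) = a := by omega
    have h2 : (-1 : R) ^ (m - a) = -(-1 : R) ^ a := by
      have : (-1 : R) ^ (m - a) * (-1) ^ a = (-1) ^ m := by
        rw [← pow_add, Nat.sub_add_cancel haM]
      have hmodd : (-1 : R) ^ m = -1 := by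
        rw [hm, pow_succ, pow_mul]; simp
      have hsq : ((-1 : R) ^ a) * ((-1 : R) ^ a) = 1 := by
        rw [← pow_add, ← two_mul, pow_mul]; simp
      calc (-1 : R) ^ (m - a) = (-1 : R) ^ (m - a) * ((-1) ^ a * (-1) ^ a) := by
            rw [hsq, mul_one]
          _ = ((-1 : R) ^ (m - a) * (-1) ^ a) * (-1) ^ a := by ring
          _ = (-1) ^ m * (-1) ^ a := by rw [this]
          _ = -(-1 : R) ^ a := by rw [hmodd]; ring
    rw [h1, h2]; ring
  · intro a ha _
    have haM : a ≤ m := Nat.lt_succ_iff.mp (Finset.mem_range.mp ha)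
    omega
  · intro a ha
    have haM : a ≤ m := Nat.lt_succ_iff.mp (Finset.mem_range.mp ha)
    exact Finset.mem_range.mpr (by omega)
  · intro a ha
    have haM : a ≤ m := Nat.lt_succ_iff.mp (Finset.mem_range.mp ha)
    omega

lemma kmNorm_eq_A (f : ℕ → R) (n : ℕ) : kmNorm f n = A f (2 * n) := by
  unfold kmNorm A cauchyConv eps
  refine Finset.sum_congr rfl fun j _ => ?_
  ring

lemma sum_even (t : ℕ → R) (h : ∀ k, t (2 * k + 1) = 0) (n : ℕ) :
    ∑ a ∈ Finset.range (2 * n + 1), t a = ∑ k ∈ Finset.range (n + 1), t (2 * k) := by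
  induction n with
  | zero => simp
  | succ n ih =>
    have h1 : 2 * (n + 1) + 1 = (2 * n + 1) + 1 + 1 := by omega
    rw [h1, Finset.sum_range_succ, Finset.sum_range_succ, ih, h n,
      Finset.sum_range_succ, Finset.sum_range_succ,
      show 2 * (n + 1) = 2 * n + 2 from by omega]
    rw [Finset.sum_range_succ]
    ring

end KMaux

/-- The Kesava Menon norm is multiplicative with respect to Cauchy
convolution: `N(f ⋆ g) = N(f) ⋆ N(g)`. -/
theorem kmNorm_cauchyConv {R : Type*} [CommRing R] (f g : ℕ → R) :
    kmNorm (cauchyConv f g) = cauchyConv (kmNorm f) (kmNorm g) := by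
  funext n
  rw [KMaux.kmNorm_eq_A, KMaux.A_conv]
  show ∑ a ∈ Finset.range (2 * n + 1), KMaux.A f a * KMaux.A g (2 * n - a) =
    cauchyConv (kmNorm f) (kmNorm g) n
  rw [KMaux.sum_even (fun a => KMaux.A f a * KMaux.A g (2 * n - a))
    (fun k => by
      show KMaux.A f (2 * k + 1) * KMaux.A g (2 * n - (2 * k + 1)) = 0
      rw [KMaux.A_odd]; ring)]
  unfold cauchyConv
  refine Finset.sum_congr rfl fun k hk => ?_
  have hkn : k ≤ n := Nat.lt_succ_iff.mp (Finset.mem_range.mp hk)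
  rw [KMaux.kmNorm_eq_A, KMaux.kmNorm_eq_A]
  congr 2
  omega
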